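/- (The entropic interpolation solves the continuity equation, the key claim underlying equations (4), (5), (13), (14).) Let ε > 0 and let φ, ψ : (0,1) × E → ℝ be C² functions satisfying the forward and backward Hamilton–Jacobi–Bellman equations ∂_t φ = (1/2)‖∇φ‖² + (ε/2)Δφ and −∂_t ψ = (1/2)‖∇ψ‖² + (ε/2)Δψ pointwise on (0,1) × E, where ∇ and Δ are the spatial gradient and Laplacian. Define ρ(t,x) = exp((φ(t,x) + ψ(t,x))/ε) and v(t,x) = (∇ψ(t,x) − ∇φ(t,x))/2. Then the continuity equation ∂_t ρ(t,x) + div(ρ v)(t,x) = 0 holds for all (t,x) ∈ (0,1) × E, where div(ρ v) = ⟨∇ρ, v⟩ + ρ·(div v) and div v is the trace of the spatial derivative of v. -/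

import Mathlib

open MeasureTheory

noncomputable section

abbrev E (d : ℕ) := EuclideanSpace ℝ (Fin d)

/-- Spatial Laplacian: the trace of the second derivative. -/
def lap {d : ℕ} (f : E d → ℝ) (x : E d) : ℝ :=
  ∑ i : Fin d, iteratedFDeriv ℝ 2 f x
    ![EuclideanSpace.single i (1 : ℝ), EuclideanSpace.single i (1 : ℝ)]

/-- Divergence of a vector field: the trace of its derivative. -/
def divg {d : ℕ} (w : E d → E d) (x : E d) : ℝ :=
  ∑ i : Fin d, fderiv ℝ w x (EuclideanSpace.single i (1 : ℝ)) i

open InnerProductSpace in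
lemma inner_gradient_aux {d : ℕ} (f : E d → ℝ) (x w : E d) :
    (inner ℝ (gradient f x) w : ℝ) = fderiv ℝ f x w := by
  rw [gradient]; exact toDual_symm_apply

open InnerProductSpace in
lemma coord_toDual_symm {d : ℕ} (L : E d →L[ℝ] ℝ) (i : Fin d) :
    ((toDual ℝ (E d)).symm L : E d) i = L (EuclideanSpace.single i (1 : ℝ)) := by
  have h := EuclideanSpace.inner_single_right (𝕜 := ℝ) i (1 : ℝ)
      ((toDual ℝ (E d)).symm L)
  have h2 : (inner ℝ ((toDual ℝ (E d)).symm L) (EuclideanSpace.single i (1 : ℝ)) : ℝ)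
      = L (EuclideanSpace.single i (1 : ℝ)) := toDual_symm_apply
  simp only [RCLike.star_def, starRingEnd_apply, star_trivial, one_mul] at h
  rw [← h2, h]

open InnerProductSpace in
lemma differentiableAt_gradient_of_contDiff {d : ℕ} {f : E d → ℝ} (hf : ContDiff ℝ 2 f)
    (x : E d) : DifferentiableAt ℝ (gradient f) x := by
  have hdf : DifferentiableAt ℝ (fderiv ℝ f) x :=
    ((hf.fderiv_right (m := 1) le_rfl).differentiable one_ne_zero).differentiableAt
  have : gradient f = ((toDual ℝ (E d)).symm : (E d →L[ℝ] ℝ) → E d) ∘ (fderiv ℝ f) := rfl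
  rw [this]
  exact ((toDual ℝ (E d)).symm.differentiable.differentiableAt).comp x hdf

open InnerProductSpace in
lemma fderiv_gradient_of_contDiff {d : ℕ} {f : E d → ℝ} (hf : ContDiff ℝ 2 f) (x u : E d) :
    fderiv ℝ (gradient f) x u = (toDual ℝ (E d)).symm (fderiv ℝ (fderiv ℝ f) x u) := by
  have hdf : DifferentiableAt ℝ (fderiv ℝ f) x :=
    ((hf.fderiv_right (m := 1) le_rfl).differentiable one_ne_zero).differentiableAt
  have : gradient f = ((toDual ℝ (E d)).symm : (E d →L[ℝ] ℝ) → E d) ∘ (fderiv ℝ f) := rfl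
  rw [this, LinearIsometryEquiv.comp_fderiv]
  rfl

theorem entropic_interpolation_continuity_equation {d : ℕ} (hd : 1 ≤ d)
    {ε : ℝ} (hε : 0 < ε)
    (φ ψ : ℝ × E d → ℝ) (hφ : ContDiff ℝ 2 φ) (hψ : ContDiff ℝ 2 ψ)
    (hHJBφ : ∀ t ∈ Set.Ioo (0 : ℝ) 1, ∀ x : E d,
      deriv (fun s => φ (s, x)) t =
        (1 / 2) * ‖gradient (fun y => φ (t, y)) x‖ ^ 2 +
          (ε / 2) * lap (fun y => φ (t, y)) x)
    (hHJBψ : ∀ t ∈ Set.Ioo (0 : ℝ) 1, ∀ x : E d,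
      -deriv (fun s => ψ (s, x)) t =
        (1 / 2) * ‖gradient (fun y => ψ (t, y)) x‖ ^ 2 +
          (ε / 2) * lap (fun y => ψ (t, y)) x)
    (ρ : ℝ × E d → ℝ) (hρ : ρ = fun r => Real.exp ((φ r + ψ r) / ε))
    (v : ℝ × E d → E d)
    (hv : v = fun r => ((2 : ℝ)⁻¹) •
      (gradient (fun y => ψ (r.1, y)) r.2 - gradient (fun y => φ (r.1, y)) r.2)) :
    ∀ t ∈ Set.Ioo (0 : ℝ) 1, ∀ x : E d,
      deriv (fun s => ρ (s, x)) t +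
        ((inner ℝ (gradient (fun y => ρ (t, y)) x) (v (t, x)) : ℝ) +
          ρ (t, x) * divg (fun y => v (t, y)) x) = 0 := by
  intro t ht x
  have hεne : ε ≠ 0 := ne_of_gt hε
  -- sliced functions
  set f : E d → ℝ := fun y => φ (t, y) with hfdef
  set g : E d → ℝ := fun y => ψ (t, y) with hgdef
  have hslice : ContDiff ℝ 2 (fun y : E d => (t, y)) := contDiff_const.prodMk contDiff_id
  have hf : ContDiff ℝ 2 f := hφ.comp hslice
  have hg : ContDiff ℝ 2 g := hψ.comp hslice
  set Gf : E d := gradient f x with hGf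
  set Gg : E d := gradient g x with hGg
  -- time slices
  have hts : ∀ s : ℝ, (fun s : ℝ => (s, x)) s = (s, x) := fun _ => rfl
  have hφt : DifferentiableAt ℝ (fun s => φ (s, x)) t :=
    ((hφ.differentiable two_ne_zero).differentiableAt).comp t
      (differentiableAt_id.prodMk (differentiableAt_const x))
  have hψt : DifferentiableAt ℝ (fun s => ψ (s, x)) t :=
    ((hψ.differentiable two_ne_zero).differentiableAt).comp t
      (differentiableAt_id.prodMk (differentiableAt_const x))
  -- value of rho
  have hρval : ρ (t, x) = Real.exp ((f x + g x) / ε) := by rw [hρ]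
  -- (A) time derivative
  have hA : deriv (fun s => ρ (s, x)) t
      = ρ (t, x) * ((deriv (fun s => φ (s, x)) t + deriv (fun s => ψ (s, x)) t) / ε) := by
    rw [hρ]
    simp only
    rw [deriv_exp (by exact ((hφt.add hψt).div_const ε))]
    rw [deriv_div_const, deriv_fun_add hφt hψt]
  -- (B) spatial gradient inner product
  have hfx : DifferentiableAt ℝ f x := (hf.differentiable two_ne_zero).differentiableAt
  have hgx : DifferentiableAt ℝ g x := (hg.differentiable two_ne_zero).differentiableAt
  have hB : ∀ w : E d, (inner ℝ (gradient (fun y => ρ (t, y)) x) w : ℝ)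
      = ρ (t, x) * ((inner ℝ Gf w + inner ℝ Gg w) / ε) := by
    intro w
    rw [inner_gradient_aux]
    have hρt : (fun y => ρ (t, y)) = fun y => Real.exp ((f y + g y) / ε) := by
      rw [hρ]
    have hH : HasFDerivAt (fun y => (f y + g y) / ε)
        ((ε⁻¹ : ℝ) • (fderiv ℝ f x + fderiv ℝ g x)) x := by
      have : (fun y => (f y + g y) / ε) = fun y => ε⁻¹ * (f y + g y) := by
        funext y; rw [div_eq_inv_mul]
      rw [this]
      simpa [fderiv_add hfx hgx] using
        ((hfx.hasFDerivAt.add hgx.hasFDerivAt).const_mul (ε⁻¹ : ℝ))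
    rw [hρt, fderiv_exp (by exact hH.differentiableAt)]
    rw [ContinuousLinearMap.smul_apply, hH.fderiv]
    rw [hρval, inner_gradient_aux, inner_gradient_aux]
    simp only [ContinuousLinearMap.smul_apply, ContinuousLinearMap.add_apply, smul_eq_mul]
    ring
  -- (C) divergence
  have hC : divg (fun y => v (t, y)) x = (2 : ℝ)⁻¹ * (lap g x - lap f x) := by
    have hvt : (fun y => v (t, y))
        = fun y => (2 : ℝ)⁻¹ • (gradient g y - gradient f y) := by
      rw [hv]
    rw [divg, hvt]
    have hdg := differentiableAt_gradient_of_contDiff hg x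
    have hdf := differentiableAt_gradient_of_contDiff hf x
    have hfd : fderiv ℝ (fun y => (2 : ℝ)⁻¹ • (gradient g y - gradient f y)) x
        = (2 : ℝ)⁻¹ • (fderiv ℝ (gradient g) x - fderiv ℝ (gradient f) x) := by
      rw [fderiv_fun_const_smul (hdg.fun_sub hdf), fderiv_fun_sub hdg hdf]
    rw [hfd, lap, lap, ← Finset.sum_sub_distrib, Finset.mul_sum]
    refine Finset.sum_congr rfl fun i _ => ?_
    rw [ContinuousLinearMap.smul_apply, ContinuousLinearMap.sub_apply]
    have e1 : fderiv ℝ (gradient g) x (EuclideanSpace.single i (1 : ℝ)) i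
        = fderiv ℝ (fderiv ℝ g) x (EuclideanSpace.single i (1 : ℝ))
            (EuclideanSpace.single i (1 : ℝ)) := by
      rw [fderiv_gradient_of_contDiff hg, coord_toDual_symm]
    have e2 : fderiv ℝ (gradient f) x (EuclideanSpace.single i (1 : ℝ)) i
        = fderiv ℝ (fderiv ℝ f) x (EuclideanSpace.single i (1 : ℝ))
            (EuclideanSpace.single i (1 : ℝ)) := by
      rw [fderiv_gradient_of_contDiff hf, coord_toDual_symm]
    have hsmul : ((2 : ℝ)⁻¹ • (fderiv ℝ (gradient g) x (EuclideanSpace.single i (1:ℝ))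
        - fderiv ℝ (gradient f) x (EuclideanSpace.single i (1:ℝ)))) i
        = (2:ℝ)⁻¹ * ((fderiv ℝ (gradient g) x (EuclideanSpace.single i (1:ℝ))) i
            - (fderiv ℝ (gradient f) x (EuclideanSpace.single i (1:ℝ))) i) := by
      simp [mul_sub]
    rw [hsmul, e1, e2, iteratedFDeriv_two_apply, iteratedFDeriv_two_apply]
    simp [mul_sub]
  -- the velocity at (t,x)
  have hvval : v (t, x) = (2 : ℝ)⁻¹ • (Gg - Gf) := by rw [hv]
  -- put everything together
  rw [hA, hB, hC, hvval]
  have hinner1 : (inner ℝ Gf ((2 : ℝ)⁻¹ • (Gg - Gf)) : ℝ)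
      = (2 : ℝ)⁻¹ * (inner ℝ Gf Gg - ‖Gf‖ ^ 2) := by
    rw [real_inner_smul_right, inner_sub_right, real_inner_self_eq_norm_sq]
  have hinner2 : (inner ℝ Gg ((2 : ℝ)⁻¹ • (Gg - Gf)) : ℝ)
      = (2 : ℝ)⁻¹ * (‖Gg‖ ^ 2 - inner ℝ Gg Gf) := by
    rw [real_inner_smul_right, inner_sub_right, real_inner_self_eq_norm_sq]
  rw [hinner1, hinner2, real_inner_comm Gg Gf]
  have h1 := hHJBφ t ht x
  have h2 := hHJBψ t ht x
  rw [← hfdef] at h1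
  rw [← hgdef] at h2
  have h2' : deriv (fun s => ψ (s, x)) t
      = -((1 / 2) * ‖gradient g x‖ ^ 2 + (ε / 2) * lap g x) := by linarith
  rw [h1, h2']
  field_simp
  ring
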